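/- Let B = {b_1 < b_2 < ...} be a sequence of positive integers with b_1 = 1 and b_{i+1} > b_1 + ... + b_i for all i. Then the complement ℕ \ FS(B) is a disjoint union of nonempty finite integer intervals (gaps): specifically, for each i with b_{i+1} > s_i + 1 (where s_i = b_1 + ... + b_i), the interval (s_i, b_{i+1}) of integers is disjoint from FS(B), and every element of ℕ \ FS(B) lies in a translate by an element of FS(B) of such an interval. -/
import Mathlib


/-- The set of finite subset sums of a sequence `b` (0 included as the empty sum). -/
def FS (b : ℕ → ℕ) : Set ℕ := {m | ∃ I : Finset ℕ, m = ∑ i ∈ I, b i}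

/-- for a superincreasing sequence starting at 1, the integers in
each open interval `(s_i, b_{i+1})` avoid `FS(b)`, and every integer outside
`FS(b)` is a translate, by an element of `FS(b)`, of an element of such a gap. -/
theorem complement_FS_gap_structure
    (b : ℕ → ℕ) (hb0 : b 0 = 1) (hmono : StrictMono b)
    (hsuper : ∀ i : ℕ, (∑ j ∈ Finset.range (i + 1), b j) < b (i + 1)) :
    (∀ i m : ℕ, (∑ j ∈ Finset.range (i + 1), b j) < m → m < b (i + 1) →
       m ∉ FS b) ∧
    (∀ m : ℕ, m ∉ FS b → ∃ t ∈ FS b, ∃ i g : ℕ,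
       (∑ j ∈ Finset.range (i + 1), b j) < g ∧ g < b (i + 1) ∧ m = t + g) := by
  have hsum : ∀ k, (∑ j ∈ Finset.range k, b j) < b k := by
    intro k
    cases k with
    | zero => simp [hb0]
    | succ n => exact hsuper n
  have part1 : ∀ i m : ℕ, (∑ j ∈ Finset.range (i + 1), b j) < m → m < b (i + 1) →
      m ∉ FS b := by
    rintro i m h1 h2 ⟨I, hI⟩
    have hsub : I ⊆ Finset.range (i + 1) := by
      intro j hj
      simp only [Finset.mem_range]
      by_contra h
      push_neg at h
      have hbj : b (i + 1) ≤ b j := hmono.le_iff_le.mpr h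
      have hjm : b j ≤ ∑ x ∈ I, b x :=
        Finset.single_le_sum (fun _ _ => Nat.zero_le _) hj
      omega
    have := Finset.sum_le_sum_of_subset (f := b) hsub
    omega
  refine ⟨part1, ?_⟩
  intro m
  induction m using Nat.strong_induction_on with
  | _ m ih =>
    intro hm
    have hm1 : 1 ≤ m := by
      rcases Nat.eq_zero_or_pos m with h | h
      · exact absurd ⟨∅, by simp [h]⟩ hm
      · exact h
    set k := Nat.findGreatest (fun k => b k ≤ m) m with hk
    have hbk : b k ≤ m :=
      Nat.findGreatest_spec (P := fun k => b k ≤ m) (m := 0) (Nat.zero_le m)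
        (by simp [hb0, hm1])
    have hbk1 : m < b (k + 1) := by
      rcases le_or_gt (k + 1) m with h | h
      · have h2 := Nat.findGreatest_is_greatest (P := fun k => b k ≤ m)
          (Nat.lt_succ_self k) h
        simp only [not_le] at h2
        exact h2
      · calc m < k + 1 := h
          _ ≤ b (k + 1) := hmono.le_apply
    rcases lt_or_ge (∑ j ∈ Finset.range (k + 1), b j) m with h | h
    · exact ⟨0, ⟨∅, by simp⟩, k, m, h, hbk1, by omega⟩
    · set m' := m - b k with hm'def
      have hsk : (∑ j ∈ Finset.range (k + 1), b j)
          = (∑ j ∈ Finset.range k, b j) + b k := Finset.sum_range_succ b k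
      have hm'lt : m' < b k := by
        have := hsum k
        omega
    -- m' is not in FS b
      have hm'FS : m' ∉ FS b := by
        rintro ⟨I, hI⟩
        apply hm
        have hIlt : ∀ j ∈ I, j < k := by
          intro j hj
          by_contra hjk
          push_neg at hjk
          have h1 : b k ≤ b j := hmono.le_iff_le.mpr hjk
          have h2 : b j ≤ ∑ x ∈ I, b x :=
            Finset.single_le_sum (fun _ _ => Nat.zero_le _) hj
          omega
        have hknI : k ∉ I := fun hk' => absurd (hIlt k hk') (lt_irrefl k)
        refine ⟨insert k I, ?_⟩
        rw [Finset.sum_insert hknI]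
        omega
      have hbkpos : 1 ≤ b k := hb0 ▸ hmono.monotone (Nat.zero_le k)
      have hm'm : m' < m := by omega
      obtain ⟨t, ⟨J, hJ⟩, i, g, hg1, hg2, hg3⟩ := ih m' hm'm hm'FS
      have hJlt : ∀ j ∈ J, j < k := by
        intro j hj
        by_contra hjk
        push_neg at hjk
        have h1 : b k ≤ b j := hmono.le_iff_le.mpr hjk
        have h2 : b j ≤ ∑ x ∈ J, b x :=
          Finset.single_le_sum (fun _ _ => Nat.zero_le _) hj
        omega
      have hknJ : k ∉ J := fun hk' => absurd (hJlt k hk') (lt_irrefl k)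
      refine ⟨t + b k, ⟨insert k J, ?_⟩, i, g, hg1, hg2, by omega⟩
      rw [Finset.sum_insert hknJ]
      omega
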